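/- Let G be a transitive imprimitive permutation group on a finite set Ω which is pre-synchronizing. Then |Ω| = 4 and G is the Klein four-group acting regularly. -/

import Mathlib

open Equiv

variable {Ω : Type*}

/-- `G` is a transitive permutation group on `Ω`. -/
def IsTransitive (G : Subgroup (Perm Ω)) : Prop :=
  ∀ x y : Ω, ∃ g ∈ G, g x = y

/-- The partition (setoid) `r` of `Ω` is `G`-invariant. -/
def IsInvariantPartition (G : Subgroup (Perm Ω)) (r : Setoid Ω) : Prop :=
  ∀ g ∈ G, ∀ x y : Ω, r.r x y → r.r (g x) (g y)

/-- The partition `r` of `Ω` is the orbit partition of the permutation group `H`. -/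
def IsOrbitPartition (H : Subgroup (Perm Ω)) (r : Setoid Ω) : Prop :=
  ∀ x y : Ω, r.r x y ↔ ∃ h ∈ H, h x = y

/-- `G` is pre-primitive: every `G`-invariant partition is the orbit partition
of a subgroup of `G`. -/
def IsPrePrimitive (G : Subgroup (Perm Ω)) : Prop :=
  ∀ r : Setoid Ω, IsInvariantPartition G r → ∃ H ≤ G, IsOrbitPartition H r

/-- `N` is a normal subgroup of the permutation group `G`. -/
def IsNormalIn (N G : Subgroup (Perm Ω)) : Prop :=
  N ≤ G ∧ ∀ g ∈ G, ∀ n ∈ N, g * n * g⁻¹ ∈ N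


/-- `r` is section-regular for `G`: there is a set `A` all of whose `G`-images are
transversals of `r`. -/
def IsSectionRegular (G : Subgroup (Perm Ω)) (r : Setoid Ω) : Prop :=
  ∃ A : Set Ω, ∀ g ∈ G, ∀ x : Ω, ∃! a : Ω, a ∈ (fun ω => g ω) '' A ∧ r.r a x

/-- `G` is pre-synchronizing: every section-regular partition for `G` is `G`-invariant. -/
def IsPreSynchronizing (G : Subgroup (Perm Ω)) : Prop :=
  ∀ r : Setoid Ω, IsSectionRegular G r → IsInvariantPartition G r


open scoped Classical

section Aux

variable {Ω : Type*}

private def kerS (χ : Ω → Ω) : Setoid Ω :=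
  ⟨fun a b => χ a = χ b, ⟨fun _ => rfl, Eq.symm, Eq.trans⟩⟩

private def Good (s : Setoid Ω) (χ : Ω → Ω) : Prop :=
  (∀ z w, s.r z w → χ z = χ w → z = w) ∧ (∀ z w, ∃ a, s.r a z ∧ χ a = χ w)

private lemma inv_iff (G : Subgroup (Perm Ω)) (R : Ω → Ω → Prop)
    (hinv : ∀ g ∈ G, ∀ a b : Ω, R a b → R (g a) (g b)) :
    ∀ g ∈ G, ∀ a b : Ω, R (g a) (g b) ↔ R a b := by
  intro g hg a b
  refine ⟨fun h => ?_, fun h => hinv g hg a b h⟩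
  have := hinv g⁻¹ (inv_mem hg) _ _ h
  simpa using this

private lemma good_sectionRegular (G : Subgroup (Perm Ω)) (s : Setoid Ω)
    (hinv : IsInvariantPartition G s) (χ : Ω → Ω) (hχ : Good s χ) (x₀ : Ω) :
    IsSectionRegular G (kerS χ) := by
  refine ⟨{z | s.r z x₀}, ?_⟩
  intro g hg x
  have himg : ∀ a : Ω, a ∈ (fun ω => g ω) '' {z | s.r z x₀} ↔ s.r a (g x₀) := by
    intro a
    constructor
    · rintro ⟨b, hb, rfl⟩; exact hinv g hg b x₀ hb
    · intro h
      refine ⟨g⁻¹ a, ?_, by simp⟩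
      have := hinv g⁻¹ (inv_mem hg) a (g x₀) h
      simpa using this
  obtain ⟨a, ha1, ha2⟩ := hχ.2 (g x₀) x
  refine ⟨a, ⟨(himg a).2 ha1, ha2⟩, ?_⟩
  rintro a' ⟨ha'1, ha'2⟩
  have h1 : s.r a' a := s.iseqv.trans ((himg a').1 ha'1) (s.iseqv.symm ha1)
  exact hχ.1 a' a h1 (ha'2.trans ha2.symm)

private lemma good_ker_inv (G : Subgroup (Perm Ω)) (hps : IsPreSynchronizing G)
    (s : Setoid Ω) (hinv : IsInvariantPartition G s) (χ : Ω → Ω) (hχ : Good s χ)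
    (x₀ : Ω) : ∀ g ∈ G, ∀ a b : Ω, χ a = χ b → χ (g a) = χ (g b) :=
  fun g hg a b h => hps (kerS χ) (good_sectionRegular G s hinv χ hχ x₀) g hg a b h

private lemma exists_good (G : Subgroup (Perm Ω)) (hG : IsTransitive G)
    (s : Setoid Ω) (hinv : IsInvariantPartition G s) (x₀ : Ω) :
    ∃ χ : Ω → Ω, Good s χ := by
  have hrep1 : ∀ x : Ω, s.r (Quotient.out (Quotient.mk s x)) x := by
    intro x
    exact Quotient.exact (Quotient.out_eq _)
  have hrep2 : ∀ x y : Ω, s.r x y →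
      Quotient.out (Quotient.mk s x) = Quotient.out (Quotient.mk s y) := by
    intro x y h
    exact congrArg Quotient.out (Quotient.sound h)
  choose ψ hψG hψ using fun b : Ω => hG b x₀
  refine ⟨fun x => ψ (Quotient.out (Quotient.mk s x)) x, ?_, ?_⟩
  · intro z w hzw heq
    have hb : Quotient.out (Quotient.mk s z) = Quotient.out (Quotient.mk s w) :=
      hrep2 z w hzw
    beta_reduce at heq
    rw [hb] at heq
    exact (ψ _).injective heq
  · intro z w
    set b := Quotient.out (Quotient.mk s z) with hbdef
    set c := Quotient.out (Quotient.mk s w) with hcdef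
    refine ⟨(ψ b)⁻¹ ((ψ c) w), ?_, ?_⟩
    · have h1 : s.r x₀ ((ψ c) w) := by
        have := hinv (ψ c) (hψG c) c w (hrep1 w)
        rwa [hψ c] at this
      have h2 : s.r ((ψ b)⁻¹ x₀) ((ψ b)⁻¹ ((ψ c) w)) :=
        hinv (ψ b)⁻¹ (inv_mem (hψG b)) _ _ h1
      have h3 : (ψ b)⁻¹ x₀ = b := by
        rw [← hψ b, Perm.coe_inv, Equiv.symm_apply_apply]
      rw [h3] at h2
      exact s.iseqv.trans (s.iseqv.symm h2) (hrep1 z)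
    · have ha : s.r ((ψ b)⁻¹ ((ψ c) w)) z := by
        have h1 : s.r x₀ ((ψ c) w) := by
          have := hinv (ψ c) (hψG c) c w (hrep1 w)
          rwa [hψ c] at this
        have h2 : s.r ((ψ b)⁻¹ x₀) ((ψ b)⁻¹ ((ψ c) w)) :=
          hinv (ψ b)⁻¹ (inv_mem (hψG b)) _ _ h1
        have h3 : (ψ b)⁻¹ x₀ = b := by
          rw [← hψ b, Perm.coe_inv, Equiv.symm_apply_apply]
        rw [h3] at h2
        exact s.iseqv.trans (s.iseqv.symm h2) (hrep1 z)
      have hb' : Quotient.out (Quotient.mk s ((ψ b)⁻¹ ((ψ c) w))) = b :=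
        (hrep2 _ z ha).trans hbdef.symm
      beta_reduce
      rw [hb', ← hcdef]
      simp

private lemma good_swap (s : Setoid Ω) (χ : Ω → Ω) (hχ : Good s χ) (x₁ p q : Ω) :
    Good s (fun z => if s.r z x₁ then Equiv.swap (χ p) (χ q) (χ z) else χ z) := by
  have hval : ∀ v : Ω, ∃ u : Ω, Equiv.swap (χ p) (χ q) (χ v) = χ u := by
    intro v
    rcases eq_or_ne (χ v) (χ p) with h | h
    · exact ⟨q, by rw [h, Equiv.swap_apply_left]⟩
    rcases eq_or_ne (χ v) (χ q) with h2 | h2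
    · exact ⟨p, by rw [h2, Equiv.swap_apply_right]⟩
    · exact ⟨v, by rw [Equiv.swap_apply_of_ne_of_ne h h2]⟩
  constructor
  · intro z w hzw heq
    by_cases hz : s.r z x₁
    · have hw : s.r w x₁ := s.iseqv.trans (s.iseqv.symm hzw) hz
      simp only [if_pos hz, if_pos hw] at heq
      exact hχ.1 z w hzw (Equiv.injective _ heq)
    · have hw : ¬ s.r w x₁ := fun h => hz (s.iseqv.trans hzw h)
      simp only [if_neg hz, if_neg hw] at heq
      exact hχ.1 z w hzw heq
  · intro z w
    have hw2 : ∃ u : Ω, (if s.r w x₁ then Equiv.swap (χ p) (χ q) (χ w) else χ w) = χ u := by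
      by_cases hw : s.r w x₁
      · simp only [if_pos hw]; exact hval w
      · exact ⟨w, by simp only [if_neg hw]⟩
    obtain ⟨u, hu⟩ := hw2
    by_cases hz : s.r z x₁
    · obtain ⟨u', hu'⟩ := hval u
      obtain ⟨a, ha1, ha2⟩ := hχ.2 z u'
      have haz : s.r a x₁ := s.iseqv.trans ha1 hz
      refine ⟨a, ha1, ?_⟩
      simp only [if_pos haz]
      rw [hu, ha2, ← hu', Equiv.swap_apply_self]
    · obtain ⟨a, ha1, ha2⟩ := hχ.2 z u
      have haz : ¬ s.r a x₁ := fun h => hz (s.iseqv.trans (s.iseqv.symm ha1) h)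
      refine ⟨a, ha1, ?_⟩
      simp only [if_neg haz]
      rw [hu, ha2]


private lemma two_classes (G : Subgroup (Perm Ω)) (hG : IsTransitive G)
    (hps : IsPreSynchronizing G) (s : Setoid Ω) (hinv : IsInvariantPartition G s)
    (hbot : ∃ p q : Ω, p ≠ q ∧ s.r p q) :
    ∀ x y z : Ω, ¬ s.r x y → ¬ s.r x z → s.r y z := by
  intro x y z hxy hxz
  by_contra hyz
  obtain ⟨p, q, hpq, hpq2⟩ := hbot
  obtain ⟨g₀, hg₀, hg₀x⟩ := hG p x
  have hy₁x : s.r (g₀ q) x := by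
    rw [← hg₀x]; exact hinv g₀ hg₀ q p (s.iseqv.symm hpq2)
  have hy₁ne : g₀ q ≠ x := by
    rw [← hg₀x]; exact fun h => hpq ((g₀.injective h)).symm
  obtain ⟨g, hg, hgx⟩ := hG x y
  have hgxx : ¬ s.r (g x) x := by rw [hgx]; exact fun h => hxy (s.iseqv.symm h)
  have hriff := inv_iff G s.r (fun g hg a b h => hinv g hg a b h)
  obtain ⟨u, hu1, hu2⟩ : ∃ u : Ω, ¬ s.r u x ∧ ¬ s.r (g u) x := by
    by_cases h : s.r (g y) x
    · refine ⟨z, fun h' => hxz (s.iseqv.symm h'), ?_⟩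
      intro h2
      have h3 : s.r (g y) (g z) := s.iseqv.trans h (s.iseqv.symm h2)
      exact hyz ((hriff g hg y z).1 h3)
    · exact ⟨y, fun h' => hxy (s.iseqv.symm h'), h⟩
  obtain ⟨χ0, hχ0⟩ := exists_good G hG s hinv x
  have hχ1 : Good s (fun w => if s.r w x then Equiv.swap (χ0 x) (χ0 u) (χ0 w) else χ0 w) :=
    good_swap s χ0 hχ0 x x u
  have e1 : (fun w => if s.r w x then Equiv.swap (χ0 x) (χ0 u) (χ0 w) else χ0 w) x
      = (fun w => if s.r w x then Equiv.swap (χ0 x) (χ0 u) (χ0 w) else χ0 w) u := by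
    beta_reduce
    rw [if_pos (s.iseqv.refl x), if_neg hu1, Equiv.swap_apply_left]
  have e1' := good_ker_inv G hps s hinv _ hχ1 x g hg x u e1
  have e1'' : χ0 (g x) = χ0 (g u) := by
    beta_reduce at e1'
    rwa [if_neg hgxx, if_neg hu2] at e1'
  have hχ2 : Good s (fun w => if s.r w x then Equiv.swap (χ0 (g₀ q)) (χ0 u) (χ0 w) else χ0 w) :=
    good_swap s χ0 hχ0 x (g₀ q) u
  have e2 : (fun w => if s.r w x then Equiv.swap (χ0 (g₀ q)) (χ0 u) (χ0 w) else χ0 w) (g₀ q)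
      = (fun w => if s.r w x then Equiv.swap (χ0 (g₀ q)) (χ0 u) (χ0 w) else χ0 w) u := by
    beta_reduce
    rw [if_pos hy₁x, if_neg hu1, Equiv.swap_apply_left]
  have hgy₁ : ¬ s.r (g (g₀ q)) x := by
    intro h
    have h2 : s.r (g (g₀ q)) (g x) := hinv g hg (g₀ q) x hy₁x
    exact hgxx (s.iseqv.trans (s.iseqv.symm h2) h)
  have e2' := good_ker_inv G hps s hinv _ hχ2 x g hg (g₀ q) u e2
  have e2'' : χ0 (g (g₀ q)) = χ0 (g u) := by
    beta_reduce at e2'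
    rwa [if_neg hgy₁, if_neg hu2] at e2'
  have hfin : g (g₀ q) = g x :=
    hχ0.1 _ _ (hinv g hg (g₀ q) x hy₁x) (e2''.trans e1''.symm)
  exact hy₁ne (g.injective hfin)

end Aux

theorem presynchronizing_imprimitive_is_klein_four
    {Ω : Type*} [Fintype Ω] (G : Subgroup (Perm Ω)) (hG : IsTransitive G)
    (himp : ∃ r : Setoid Ω, IsInvariantPartition G r ∧ r ≠ ⊥ ∧ r ≠ ⊤)
    (hps : IsPreSynchronizing G) :
    Fintype.card Ω = 4 ∧ Nat.card G = 4 ∧ (∀ g ∈ G, g * g = 1) ∧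
      ∀ g ∈ G, ∀ x : Ω, g x = x → g = 1 := by
  obtain ⟨r, hrinv, hrbot, hrtop⟩ := himp
  have hbot : ∃ p q : Ω, p ≠ q ∧ r.r p q := by
    by_contra h
    push_neg at h
    apply hrbot
    refine Setoid.ext fun a b => ?_
    rw [Setoid.bot_def]
    exact ⟨fun hab => by_contra fun hne => (h a b hne) hab, fun hab => hab ▸ r.iseqv.refl a⟩
  have htop : ∃ a b : Ω, ¬ r.r a b := by
    by_contra h
    push_neg at h
    exact hrtop (Setoid.eq_top_iff.2 h)
  obtain ⟨p0, q0, hp0q0, hrp0q0⟩ := hbot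
  obtain ⟨x1, b0, hb0⟩ := htop
  have hbq : ¬ r.r b0 x1 := fun h => hb0 (r.iseqv.symm h)
  have hy1 : ∃ y1 : Ω, y1 ≠ x1 ∧ r.r y1 x1 := by
    obtain ⟨gp, hgp, hgpx⟩ := hG p0 x1
    refine ⟨gp q0, ?_, ?_⟩
    · rw [← hgpx]; exact fun h => hp0q0 (gp.injective h).symm
    · rw [← hgpx]; exact hrinv gp hgp q0 p0 (r.iseqv.symm hrp0q0)
  obtain ⟨y1, hy1ne, hy1x⟩ := hy1
  obtain ⟨χ0, hχ0⟩ := exists_good G hG r hrinv x1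
  have hker0 : ∀ g ∈ G, ∀ a b : Ω, χ0 a = χ0 b → χ0 (g a) = χ0 (g b) :=
    good_ker_inv G hps r hrinv χ0 hχ0 x1
  obtain ⟨x2, hx2b, hx2c⟩ := hχ0.2 b0 x1
  have hx2r : ¬ r.r x2 x1 := fun h => hbq (r.iseqv.trans (r.iseqv.symm hx2b) h)
  obtain ⟨y2, hy2b, hy2c⟩ := hχ0.2 b0 y1
  have hy2r : ¬ r.r y2 x1 := fun h => hbq (r.iseqv.trans (r.iseqv.symm hy2b) h)
  have htne : χ0 y1 ≠ χ0 x1 := fun h => hy1ne (hχ0.1 y1 x1 hy1x h)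
  have hx2y2 : r.r x2 y2 := r.iseqv.trans hx2b (r.iseqv.symm hy2b)
  have twoR := two_classes G hG hps r hrinv ⟨p0, q0, hp0q0, hrp0q0⟩
  have hkinv : IsInvariantPartition G (kerS χ0) := fun g hg a b h => hker0 g hg a b h
  have hx2ne1 : x2 ≠ x1 := fun h => hx2r (by rw [h])
  have twoT := two_classes G hG hps (kerS χ0) hkinv ⟨x2, x1, hx2ne1, hx2c⟩
  set χ' : Ω → Ω := fun w => if r.r w x1 then Equiv.swap (χ0 x1) (χ0 y1) (χ0 w) else χ0 w
    with hχ'def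
  have hχ'g : Good r χ' := good_swap r χ0 hχ0 x1 x1 y1
  have hker' : ∀ g ∈ G, ∀ a b : Ω, χ' a = χ' b → χ' (g a) = χ' (g b) :=
    good_ker_inv G hps r hrinv χ' hχ'g x1
  have c1' : χ' x1 = χ0 y1 := by
    rw [hχ'def]; beta_reduce
    rw [if_pos (r.iseqv.refl x1), Equiv.swap_apply_left]
  have c2' : χ' y1 = χ0 x1 := by
    rw [hχ'def]; beta_reduce
    rw [if_pos hy1x, Equiv.swap_apply_right]
  have c3' : χ' x2 = χ0 x1 := by
    rw [hχ'def]; beta_reduce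
    rw [if_neg hx2r]; exact hx2c
  have c4' : χ' y2 = χ0 y1 := by
    rw [hχ'def]; beta_reduce
    rw [if_neg hy2r]; exact hy2c
  have Riff := inv_iff G r.r (fun g hg a b h => hrinv g hg a b h)
  have Tiff := inv_iff G (fun a b => χ0 a = χ0 b) hker0
  have enum : ∀ w : Ω, w = x1 ∨ w = y1 ∨ w = x2 ∨ w = y2 := by
    intro w
    by_cases h1 : r.r w x1 <;> by_cases h2 : χ0 w = χ0 x1
    · exact Or.inl (hχ0.1 w x1 h1 h2)
    · refine Or.inr (Or.inl ?_)
      have hcw : χ0 w = χ0 y1 := twoT x1 w y1 (fun h => h2 h.symm) (fun h => htne h.symm)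
      exact hχ0.1 w y1 (r.iseqv.trans h1 (r.iseqv.symm hy1x)) hcw
    · refine Or.inr (Or.inr (Or.inl ?_))
      have hrw : r.r w x2 :=
        twoR x1 w x2 (fun h => h1 (r.iseqv.symm h)) (fun h => hx2r (r.iseqv.symm h))
      exact hχ0.1 w x2 hrw (h2.trans hx2c.symm)
    · refine Or.inr (Or.inr (Or.inr ?_))
      have hrw : r.r w y2 :=
        twoR x1 w y2 (fun h => h1 (r.iseqv.symm h)) (fun h => hy2r (r.iseqv.symm h))
      have hcw : χ0 w = χ0 y1 := twoT x1 w y1 (fun h => h2 h.symm) (fun h => htne h.symm)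
      exact hχ0.1 w y2 hrw (hcw.trans hy2c.symm)
  have d12 : x1 ≠ y1 := fun h => hy1ne h.symm
  have d13 : x1 ≠ x2 := fun h => hx2ne1 h.symm
  have d14 : x1 ≠ y2 := fun h => hy2r (by rw [← h])
  have d23 : y1 ≠ x2 := fun h => htne (by rw [h]; exact hx2c)
  have d24 : y1 ≠ y2 := fun h => hy2r (by rw [← h]; exact hy1x)
  have d34 : x2 ≠ y2 := fun h => htne (hy2c.symm.trans (h ▸ hx2c))
  have huniv : ({x1, y1, x2, y2} : Finset Ω) = Finset.univ := by
    refine Finset.eq_univ_iff_forall.2 fun w => ?_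
    rcases enum w with e | e | e | e <;> simp [e]
  have hcard : Fintype.card Ω = 4 := by
    rw [← Finset.card_univ, ← huniv]
    rw [Finset.card_insert_of_notMem (by simp [d12, d13, d14]),
      Finset.card_insert_of_notMem (by simp [d23, d24]),
      Finset.card_insert_of_notMem (by simp [d34]), Finset.card_singleton]
  -- fixed point at x1 implies identity
  have hfix1 : ∀ g ∈ G, g x1 = x1 → g = 1 := by
    intro g hg h1
    have hy : g y1 = y1 := by
      have hr : r.r (g y1) (g x1) := hrinv g hg y1 x1 hy1x
      have ht : ¬ χ0 (g y1) = χ0 (g x1) := fun h => htne ((Tiff g hg y1 x1).1 h)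
      rw [h1] at hr ht
      rcases enum (g y1) with e | e | e | e
      · rw [e] at ht; exact absurd rfl ht
      · exact e
      · rw [e] at hr; exact absurd hr hx2r
      · rw [e] at hr; exact absurd hr hy2r
    have hx2' : g x2 = x2 := by
      have ht : χ0 (g x2) = χ0 (g x1) := hker0 g hg x2 x1 hx2c
      have hr : ¬ r.r (g x2) (g x1) := fun h => hx2r ((Riff g hg x2 x1).1 h)
      rw [h1] at ht hr
      rcases enum (g x2) with e | e | e | e
      · rw [e] at hr; exact absurd (r.iseqv.refl x1) hr
      · rw [e] at ht; exact absurd ht htne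
      · exact e
      · rw [e] at ht; exact absurd (hy2c.symm.trans ht) htne
    have hy2' : g y2 = y2 := by
      have ht : χ0 (g y2) = χ0 (g y1) := hker0 g hg y2 y1 hy2c
      have hr : ¬ r.r (g y2) (g x1) := fun h => hy2r ((Riff g hg y2 x1).1 h)
      rw [h1] at hr; rw [hy] at ht
      rcases enum (g y2) with e | e | e | e
      · rw [e] at hr; exact absurd (r.iseqv.refl x1) hr
      · rw [e] at hr; exact absurd hy1x hr
      · rw [e] at ht; exact absurd (hx2c.symm.trans ht).symm htne
      · exact e
    refine Equiv.ext fun w => ?_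
    rcases enum w with e | e | e | e <;> rw [e] <;> simp [h1, hy, hx2', hy2']
  -- any fixed point implies identity
  have hfix : ∀ g ∈ G, ∀ w : Ω, g w = w → g = 1 := by
    intro g hg w hw
    rcases enum w with e | e | e | e <;> rw [e] at hw
    · exact hfix1 g hg hw
    · -- g y1 = y1 : pin g x1
      have hr : r.r (g x1) (g y1) := hrinv g hg x1 y1 (r.iseqv.symm hy1x)
      have ht : ¬ χ0 (g x1) = χ0 (g y1) := fun h => htne ((Tiff g hg x1 y1).1 h).symm
      rw [hw] at hr ht
      rcases enum (g x1) with e2 | e2 | e2 | e2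
      · exact hfix1 g hg e2
      · rw [e2] at ht; exact absurd rfl ht
      · rw [e2] at hr; exact absurd (r.iseqv.trans hr hy1x) hx2r
      · rw [e2] at hr; exact absurd (r.iseqv.trans hr hy1x) hy2r
    · -- g x2 = x2
      have ht : χ0 (g x1) = χ0 (g x2) := hker0 g hg x1 x2 hx2c.symm
      have hr : ¬ r.r (g x1) (g x2) := fun h => hx2r (r.iseqv.symm ((Riff g hg x1 x2).1 h))
      rw [hw] at ht hr
      rcases enum (g x1) with e2 | e2 | e2 | e2
      · exact hfix1 g hg e2
      · rw [e2] at ht; exact absurd (ht.trans hx2c) htne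
      · rw [e2] at hr; exact absurd (r.iseqv.refl x2) hr
      · rw [e2] at hr; exact absurd (r.iseqv.symm hx2y2) hr
    · -- g y2 = y2
      have ht : χ' (g x1) = χ' (g y2) := hker' g hg x1 y2 (c1'.trans c4'.symm)
      have hr : ¬ r.r (g x1) (g y2) := fun h => hy2r (r.iseqv.symm ((Riff g hg x1 y2).1 h))
      rw [hw] at ht hr
      rcases enum (g x1) with e2 | e2 | e2 | e2
      · exact hfix1 g hg e2
      · rw [e2, c2', c4'] at ht; exact absurd ht.symm htne
      · rw [e2, c3', c4'] at ht; exact absurd ht.symm htne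
      · rw [e2] at hr; exact absurd (r.iseqv.refl y2) hr
  -- g (g x1) = x1
  have hsq : ∀ g ∈ G, g (g x1) = x1 := by
    intro g hg
    rcases enum (g x1) with e | e | e | e <;> rw [e]
    · exact e
    · have hr : r.r (g y1) (g x1) := hrinv g hg y1 x1 hy1x
      have ht : ¬ χ0 (g y1) = χ0 (g x1) := fun h => htne ((Tiff g hg y1 x1).1 h)
      rw [e] at hr ht
      rcases enum (g y1) with e2 | e2 | e2 | e2
      · exact e2
      · rw [e2] at ht; exact absurd rfl ht
      · rw [e2] at hr; exact absurd (r.iseqv.trans hr hy1x) hx2r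
      · rw [e2] at hr; exact absurd (r.iseqv.trans hr hy1x) hy2r
    · have ht : χ0 (g x2) = χ0 (g x1) := hker0 g hg x2 x1 hx2c
      have hr : ¬ r.r (g x2) (g x1) := fun h => hx2r ((Riff g hg x2 x1).1 h)
      rw [e] at ht hr
      rcases enum (g x2) with e2 | e2 | e2 | e2
      · exact e2
      · rw [e2] at ht; exact absurd (ht.trans hx2c) htne
      · rw [e2] at hr; exact absurd (r.iseqv.refl x2) hr
      · rw [e2] at ht; exact absurd (hy2c.symm.trans (ht.trans hx2c)) htne
    · have ht : χ' (g y2) = χ' (g x1) := hker' g hg y2 x1 (c4'.trans c1'.symm)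
      have hr : ¬ r.r (g y2) (g x1) := fun h => hy2r ((Riff g hg y2 x1).1 h)
      rw [e] at ht hr
      rcases enum (g y2) with e2 | e2 | e2 | e2
      · exact e2
      · rw [e2, c2', c4'] at ht; exact absurd ht.symm htne
      · rw [e2, c3', c4'] at ht; exact absurd ht.symm htne
      · rw [e2] at hr; exact absurd (r.iseqv.refl y2) hr
  have hcardG : Nat.card G = 4 := by
    have hbij : Function.Bijective (fun g : G => (g : Perm Ω) x1) := by
      constructor
      · intro g g' h
        have hmem : (g' : Perm Ω)⁻¹ * (g : Perm Ω) ∈ G := mul_mem (inv_mem g'.2) g.2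
        have h' : (g : Perm Ω) x1 = (g' : Perm Ω) x1 := h
        have hfx : ((g' : Perm Ω)⁻¹ * (g : Perm Ω)) x1 = x1 := by
          rw [Perm.mul_apply, h', Perm.coe_inv, Equiv.symm_apply_apply]
        have := hfix _ hmem x1 hfx
        have heq : (g : Perm Ω) = (g' : Perm Ω) := by
          rw [inv_mul_eq_one] at this; exact this.symm
        exact Subtype.ext heq
      · intro w
        obtain ⟨g, hg, hgw⟩ := hG x1 w
        exact ⟨⟨g, hg⟩, hgw⟩
    rw [Nat.card_eq_of_bijective _ hbij, Nat.card_eq_fintype_card, hcard]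
  refine ⟨hcard, hcardG, ?_, fun g hg w hw => hfix g hg w hw⟩
  intro g hg
  apply hfix (g * g) (mul_mem hg hg) x1
  rw [Perm.mul_apply]
  exact hsq g hg
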